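/- For every n ≥ 1, writing T^{⊠n} = u_n·e1 + v_n·e2 + w_n·e3 ∈ R^3: (i) deg_s v_n = 8n and the coefficient of s^{8n} in v_n has q-degree 2n with leading coefficient 4^n; (ii) deg_s u_n = 8n − 2 and the coefficient of s^{8n−2} in u_n has q-degree 2n with leading coefficient n·4^n; (iii) deg_s w_n ≤ 8n − 2, and if the coefficient of s^{8n−2} in w_n is nonzero then its q-degree is at most 2n − 2. -/

import Mathlib

noncomputable section

open LaurentPolynomial

/-- `ℤ[q^{±1}]`, the ring of Laurent polynomials over `ℤ` in the variable `q`. -/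
abbrev Rq : Type := LaurentPolynomial ℤ

/-- `R = ℤ[q^{±1}, s^{±1}]`, realized as Laurent polynomials in `s`
with coefficients in `ℤ[q^{±1}]`. -/
abbrev R2 : Type := LaurentPolynomial Rq

/-- The variable `q` of `R`. -/
def q : R2 := C (T 1)
/-- The inverse `q⁻¹` of the variable `q`. -/
def qi : R2 := C (T (-1))
/-- The variable `s` of `R`. -/
def s : R2 := T 1
/-- The inverse `s⁻¹` of the variable `s`. -/
def si : R2 := T (-1)

/-- The coefficient of `s^k` in `f`, an element of `ℤ[q^{±1}]`. -/
def sCoeff (f : R2) (k : ℤ) : Rq := AddMonoidAlgebra.coeff f k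
/-- The coefficient of `q^k` in `g ∈ ℤ[q^{±1}]`. -/
def qCoeff (g : Rq) (k : ℤ) : ℤ := AddMonoidAlgebra.coeff g k

/-- `deg_s f = d`: the largest exponent of `s` occurring in `f` is `d`. -/
def sDegIs (f : R2) (d : ℤ) : Prop :=
  sCoeff f d ≠ 0 ∧ ∀ k : ℤ, d < k → sCoeff f k = 0

/-- `ldeg_s f = d`: the smallest exponent of `s` occurring in `f` is `d`. -/
def sLdegIs (f : R2) (d : ℤ) : Prop :=
  sCoeff f d ≠ 0 ∧ ∀ k : ℤ, k < d → sCoeff f k = 0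

/-- `g ∈ ℤ[q^{±1}]` has `q`-degree `m` with leading coefficient `c`. -/
def qLeadIs (g : Rq) (m : ℤ) (c : ℤ) : Prop :=
  qCoeff g m = c ∧ c ≠ 0 ∧ ∀ k : ℤ, m < k → qCoeff g k = 0

/-- Vectors in the free module `R^3` with basis `e1, e2, e3`. -/
abbrev V3 : Type := R2 × R2 × R2

/-- `e1 ⊠ e3 = aCoef · e1` where `aCoef = q^{-1}(s − s^{-1})(qs − q^{-1}s^{-1})`. -/
def aCoef : R2 := qi * (s - si) * (q * s - qi * si)
/-- `e1`-component of `e3 ⊠ e3`. -/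
def X1 : R2 := (s^2 + qi^2*si^2) * (1 + qi^2) - 3*qi^2 - qi^4
/-- `e2`-component of `e3 ⊠ e3`. -/
def X2 : R2 := -(s^4 + qi^4*si^4) + (s^2 + qi^2*si^2) * (3 + qi^2) - 2 - 4*qi^2
/-- `e3`-component of `e3 ⊠ e3`. -/
def X3 : R2 := 2*(s^2 + qi^2*si^2) - 3 - qi^2

/-- The commutative bilinear product `⊠` on `R^3` determined by
`e1⊠e1 = 0`, `e1⊠e2 = e1`, `e2⊠e2 = e2`, `e2⊠e3 = e3`, `e1⊠e3 = aCoef·e1`,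
`e3⊠e3 = X1·e1 + X2·e2 + X3·e3`. -/
def boxt (u v : V3) : V3 :=
  (u.1 * v.2.1 + u.2.1 * v.1 + aCoef * (u.1 * v.2.2 + u.2.2 * v.1) + X1 * (u.2.2 * v.2.2),
   u.2.1 * v.2.1 + X2 * (u.2.2 * v.2.2),
   u.2.1 * v.2.2 + u.2.2 * v.2.1 + X3 * (u.2.2 * v.2.2))

/-- First component of `TT⁺`. -/
def TTp1 : R2 :=
  (s^2 + qi^2*si^2) * (1 - 2*qi^2 + 2*qi^4 - 2*qi^6 + 4*qi^8 - 2*qi^10)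
    - 2 + 3*qi^2 - 4*qi^4 + 4*qi^6 - 8*qi^8 + 4*qi^10
/-- Second component of `TT⁺`. -/
def TTp2 : R2 :=
  (s^4 + qi^4*si^4) * (2 - 2*qi^2 - 4*qi^6 + 4*qi^8)
    + (s^2 + qi^2*si^2) * (-5 + 4*qi^2 + 12*qi^6 - 8*qi^8 - 4*qi^10)
    + 4 + 3*qi^2 - 6*qi^4 - 6*qi^6 - 8*qi^8 + 16*qi^10
/-- Third component of `TT⁺`. -/
def TTp3 : R2 :=
  (s^2 + qi^2*si^2) * (2*qi^2 - 2*qi^4 + 2*qi^6 - 4*qi^8 + 2*qi^10)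
    + 1 - 4*qi^2 + 4*qi^4 - 4*qi^6 + 8*qi^8 - 4*qi^10
/-- First component of `TT⁻`. -/
def TTm1 : R2 :=
  (s^2 + qi^2*si^2) * (q^2 - 2 + 2*qi^2 - 2*qi^4 + 4*qi^6 - 2*qi^8)
    - 1 + 4*qi^2 - 4*qi^4 + 4*qi^6 - 8*qi^8 + 4*qi^10
/-- Second component of `TT⁻`. -/
def TTm2 : R2 :=
  (s^4 + qi^4*si^4) * (2*q^2 - 2 - 4*qi^4 + 4*qi^6)
    + (s^2 + qi^2*si^2) * (-3*q^2 - 4 + 8*qi^2 + 4*qi^4 + 8*qi^6 - 12*qi^8)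
    + q^2 + 10 - 6*qi^2 - 6*qi^4 - 16*qi^6 + 8*qi^8 + 8*qi^10
/-- Third component of `TT⁻`. -/
def TTm3 : R2 :=
  (s^2 + qi^2*si^2) * (2 - 2*qi^2 + 2*qi^4 - 4*qi^6 + 2*qi^8)
    - q^2 - 4*qi^2 + 4*qi^4 - 4*qi^6 + 8*qi^8 - 4*qi^10

/-- The vector `TT⁺ = TT⁺_1·e1 + TT⁺_2·e2 + TT⁺_3·e3`. -/
def TTp : V3 := (TTp1, TTp2, TTp3)
/-- The vector `TT⁻ = TT⁻_1·e1 + TT⁻_2·e2 + TT⁻_3·e3`. -/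
def TTm : V3 := (TTm1, TTm2, TTm3)

/-- `T := TT⁺ ⊠ TT⁻`. -/
def Tvec : V3 := boxt TTp TTm

/-- Iterated powers `T^{⊠n}`: `T^{⊠1} = T` and `T^{⊠(n+1)} = T^{⊠n} ⊠ T`.
(`Tpow 0` is set to `e2`, which is a two-sided identity for `⊠`, so that
`Tpow 1 = T` holds definitionally.) -/
def Tpow : ℕ → V3
  | 0 => (0, 1, 0)
  | n + 1 => boxt (Tpow n) Tvec

/-- `AS*(e1)`, the Links–Gould polynomial of the connected sum of two Hopf links. -/
def AS1 : R2 :=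
  (s^6 + qi^6*si^6) - (s^4 + qi^4*si^4) * (1 + qi^2)
    + (s^2 + qi^2*si^2) * (1 + 2*qi^2) - 1 - 2*qi^2 - qi^4
/-- `AS*(e2)`. -/
def AS2 : R2 :=
  (s^4 + qi^4*si^4) - (s^2 + qi^2*si^2) * (2 + 2*qi^2) + 1 + 4*qi^2 + qi^4
/-- `AS*(e3)`. -/
def AS3 : R2 :=
  (s^6 + qi^6*si^6) * (3 + qi^2) - (s^4 + qi^4*si^4) * (7 + 8*qi^2 + qi^4)
    + (s^2 + qi^2*si^2) * (7 + 18*qi^2 + 7*qi^4) - 3 - 18*qi^2 - 17*qi^4 - 2*qi^6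

/-- The `R`-linear map `AS* : R^3 → R`. -/
def ASstar (u : V3) : R2 := u.1 * AS1 + u.2.1 * AS2 + u.2.2 * AS3

/-- `P_n := AS*(T^{⊠n})`, the Links–Gould polynomial of the `n`-th Allen–Swenberg link. -/
def P (n : ℕ) : R2 := ASstar (Tpow n)


-- ======================= auxiliary lead calculus =======================
section LeadCalc
variable {A : Type*} [CommRing A]

def LBd (f : LaurentPolynomial A) (d : ℤ) : Prop := ∀ k : ℤ, d < k → f.coeff k = 0

def Lead (f : LaurentPolynomial A) (d : ℤ) (c : A) : Prop := f.coeff d = c ∧ LBd f d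

theorem LBd.mul {f g : LaurentPolynomial A} {a b : ℤ} (hf : LBd f a) (hg : LBd g b) :
    LBd (f * g) (a + b) := by
  intro k hk
  rw [AddMonoidAlgebra.coeff_mul, Finsupp.sum]
  refine Finset.sum_eq_zero (fun a1 h1 => ?_)
  rw [Finsupp.sum]
  refine Finset.sum_eq_zero (fun a2 h2 => ?_)
  rw [Finsupp.mem_support_iff] at h1 h2
  have ha1 : a1 ≤ a := not_lt.1 (fun hl => h1 (hf a1 hl))
  have ha2 : a2 ≤ b := not_lt.1 (fun hl => h2 (hg a2 hl))
  rw [if_neg]; omega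

theorem mul_top {f g : LaurentPolynomial A} {a b : ℤ} (hf : LBd f a) (hg : LBd g b) :
    (f * g).coeff (a + b) = f.coeff a * g.coeff b := by
  rw [AddMonoidAlgebra.coeff_mul, Finsupp.sum]
  by_cases hfa : f.coeff a = 0
  · rw [hfa, zero_mul]
    refine Finset.sum_eq_zero (fun a1 h1 => ?_)
    rw [Finsupp.mem_support_iff] at h1
    have ha1 : a1 < a := lt_of_le_of_ne (not_lt.1 (fun hl => h1 (hf a1 hl)))
      (fun h => h1 (h ▸ hfa))
    rw [Finsupp.sum]
    refine Finset.sum_eq_zero (fun a2 h2 => ?_)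
    rw [Finsupp.mem_support_iff] at h2
    have ha2 : a2 ≤ b := not_lt.1 (fun hl => h2 (hg a2 hl))
    rw [if_neg]; omega
  · rw [Finset.sum_eq_single a]
    · rw [Finsupp.sum]
      by_cases hgb : g.coeff b = 0
      · rw [hgb, mul_zero]
        refine Finset.sum_eq_zero (fun a2 h2 => ?_)
        rw [Finsupp.mem_support_iff] at h2
        have ha2 : a2 < b := lt_of_le_of_ne (not_lt.1 (fun hl => h2 (hg a2 hl)))
          (fun h => h2 (h ▸ hgb))
        rw [if_neg]; omega
      · rw [Finset.sum_eq_single b]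
        · rw [if_pos rfl]
        · intro a2 h2 hne
          rw [Finsupp.mem_support_iff] at h2
          have ha2 : a2 < b := lt_of_le_of_ne (not_lt.1 (fun hl => h2 (hg a2 hl))) hne
          rw [if_neg]; omega
        · intro h; rw [Finsupp.notMem_support_iff.1 h, mul_zero, if_pos rfl]
    · intro a1 h1 hne
      rw [Finsupp.mem_support_iff] at h1
      have ha1 : a1 < a := lt_of_le_of_ne (not_lt.1 (fun hl => h1 (hf a1 hl))) hne
      rw [Finsupp.sum]
      refine Finset.sum_eq_zero (fun a2 h2 => ?_)
      rw [Finsupp.mem_support_iff] at h2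
      have ha2 : a2 ≤ b := not_lt.1 (fun hl => h2 (hg a2 hl))
      rw [if_neg]; omega
    · intro h; exact absurd (Finsupp.notMem_support_iff.1 h) hfa

theorem Lead.mul {f g : LaurentPolynomial A} {a b : ℤ} {c d : A}
    (h1 : Lead f a c) (h2 : Lead g b d) : Lead (f * g) (a + b) (c * d) :=
  ⟨by rw [mul_top h1.2 h2.2, h1.1, h2.1], h1.2.mul h2.2⟩

theorem LBd.zero (d : ℤ) : LBd (0 : LaurentPolynomial A) d := fun _ _ => rfl

theorem Lead.zero (d : ℤ) : Lead (0 : LaurentPolynomial A) d 0 := ⟨rfl, LBd.zero d⟩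

theorem LBd.add {f g : LaurentPolynomial A} {d : ℤ} (h1 : LBd f d) (h2 : LBd g d) :
    LBd (f + g) d := fun k hk => by
  rw [AddMonoidAlgebra.coeff_add, Finsupp.add_apply, h1 k hk, h2 k hk, add_zero]

theorem Lead.add {f g : LaurentPolynomial A} {d : ℤ} {c c' : A}
    (h1 : Lead f d c) (h2 : Lead g d c') : Lead (f + g) d (c + c') :=
  ⟨by rw [AddMonoidAlgebra.coeff_add, Finsupp.add_apply, h1.1, h2.1], h1.2.add h2.2⟩

theorem Lead.neg {f : LaurentPolynomial A} {d : ℤ} {c : A} (h : Lead f d c) :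
    Lead (-f) d (-c) :=
  ⟨by rw [AddMonoidAlgebra.coeff_neg, Finsupp.neg_apply, h.1], fun k hk => by rw [AddMonoidAlgebra.coeff_neg, Finsupp.neg_apply, h.2 k hk, neg_zero]⟩

theorem Lead.sub {f g : LaurentPolynomial A} {d : ℤ} {c c' : A}
    (h1 : Lead f d c) (h2 : Lead g d c') : Lead (f - g) d (c - c') := by
  rw [sub_eq_add_neg, sub_eq_add_neg]; exact h1.add h2.neg

theorem LBd.weak {f : LaurentPolynomial A} {a : ℤ} (h : LBd f a) (e : ℤ) (he : a ≤ e) :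
    LBd f e := fun k hk => h k (lt_of_le_of_lt he hk)

theorem LBd.lt {f : LaurentPolynomial A} {a : ℤ} (h : LBd f a) (e : ℤ) (he : a < e) :
    Lead f e 0 := ⟨h e he, h.weak e he.le⟩

theorem Lead.weak {f : LaurentPolynomial A} {a : ℤ} {c : A} (h : Lead f a c) (e : ℤ)
    (he : a < e) : Lead f e 0 := h.2.lt e he

theorem LBd.add' {f g : LaurentPolynomial A} {a b : ℤ} (h1 : LBd f a) (h2 : LBd g b)
    (e : ℤ) (h1e : a ≤ e) (h2e : b ≤ e) : LBd (f + g) e :=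
  (h1.weak e h1e).add (h2.weak e h2e)

theorem Lead.congrD {f : LaurentPolynomial A} {a : ℤ} {c : A} (h : Lead f a c) (e : ℤ)
    (he : a = e) : Lead f e c := he ▸ h

theorem Lead.congrC {f : LaurentPolynomial A} {a : ℤ} {c : A} (h : Lead f a c) (x : A)
    (hc : c = x) : Lead f a x := hc ▸ h

theorem Lead.ofLBd {f : LaurentPolynomial A} {d : ℤ} (h : LBd f d) : Lead f d (f.coeff d) :=
  ⟨rfl, h⟩

theorem Lead.sgl (n : ℤ) (x : A) : Lead (AddMonoidAlgebra.single n x) n x := by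
  constructor
  · rw [AddMonoidAlgebra.coeff_single, Finsupp.single_apply, if_pos rfl]
  · intro k hk
    rw [AddMonoidAlgebra.coeff_single, Finsupp.single_apply, if_neg (by omega)]

theorem Lead.tvar (n : ℤ) : Lead (LaurentPolynomial.T n : LaurentPolynomial A) n 1 :=
  Lead.sgl n 1

theorem Lead.Cc (x : A) : Lead (LaurentPolynomial.C x) 0 x := Lead.sgl 0 x

theorem Lead.one : Lead (1 : LaurentPolynomial A) 0 1 := by
  have := Lead.Cc (1 : A); rwa [map_one] at this

theorem Lead.ofNat (k : ℕ) [k.AtLeastTwo] :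
    Lead (OfNat.ofNat k : LaurentPolynomial A) 0 (OfNat.ofNat k) := by
  have := Lead.Cc (OfNat.ofNat k : A); rwa [map_ofNat] at this

theorem Lead.pow {f : LaurentPolynomial A} {a : ℤ} {c : A} (h : Lead f a c) (k : ℕ) :
    Lead (f ^ k) ((k : ℤ) * a) (c ^ k) := by
  induction k with
  | zero => simpa using Lead.one
  | succ m ih =>
      have h2 := ih.mul h
      rw [← pow_succ, ← pow_succ] at h2
      exact h2.congrD _ (by push_cast; ring)

end LeadCalc

theorem lead_s : Lead s 1 (1 : Rq) := Lead.tvar 1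
theorem lead_si : Lead si (-1) (1 : Rq) := Lead.tvar (-1)
theorem lead_q : Lead q 0 (LaurentPolynomial.T 1 : Rq) := Lead.Cc _
theorem lead_qi : Lead qi 0 (LaurentPolynomial.T (-1) : Rq) := Lead.Cc _

-- ======================= generated base-case lemmas =======================
set_option maxHeartbeats 2000000 in
theorem lead_TTp1 : Lead TTp1 2 ((1 + (-2) * (T (-1))^2 + 2 * (T (-1))^4 + (-2) * (T (-1))^6 + 4 * (T (-1))^8 + (-2) * (T (-1))^10 : Rq)) := by
  unfold TTp1
  exact (((((((((((((((((((((lead_s).pow 2).congrD 2 (by norm_num))).add ((((((((lead_qi).pow 2).congrD 0 (by norm_num))).mul ((((lead_si).pow 2).congrD (-2) (by norm_num)))).congrD (-2) (by norm_num))).weak 2 (by norm_num)))).mul (((((((((((Lead.one).sub (((((Lead.ofNat 2)).mul ((((lead_qi).pow 2).congrD 0 (by norm_num)))).congrD 0 (by norm_num))))).add (((((Lead.ofNat 2)).mul ((((lead_qi).pow 4).congrD 0 (by norm_num)))).congrD 0 (by norm_num))))).sub (((((Lead.ofNat 2)).mul ((((lead_qi).pow 6).congrD 0 (by norm_num)))).congrD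 0 (by norm_num))))).add (((((Lead.ofNat 4)).mul ((((lead_qi).pow 8).congrD 0 (by norm_num)))).congrD 0 (by norm_num))))).sub (((((Lead.ofNat 2)).mul ((((lead_qi).pow 10).congrD 0 (by norm_num)))).congrD 0 (by norm_num)))))).congrD 2 (by norm_num))).sub (((Lead.ofNat 2)).weak 2 (by norm_num)))).add ((((((Lead.ofNat 3)).mul ((((lead_qi).pow 2).congrD 0 (by norm_num)))).congrD 0 (by norm_num))).weak 2 (by norm_num)))).sub ((((((Lead.ofNat 4)).mul ((((lead_qi).pow 4).congrD 0 (by norm_num)))).congrD 0 (by norm_num))).weak 2 (by norm_num)))).add ((((((Lead.ofNat 4)).mul ((((lead_qi).pow 6).congrD 0 (by norm_num)))).congrD 0 (by norm_num))).weak 2 (by norm_num)))).sub ((((((Lead.ofNat 8)).mul ((((lead_qi).pow 8).congrD 0 (by norm_num)))).congrD 0 (by norm_num))).weak 2 (by norm_num)))).add ((((((Lead.ofNat 4)).mul ((((lead_qi).pow 10).congrD 0 (by norm_num)))).congrD 0 (by norm_num))).weak 2 (by norm_num)))).congrC ((1 + (-2) * (T (-1))^2 + 2 * (T (-1))^4 +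 (-2) * (T (-1))^6 + 4 * (T (-1))^8 + (-2) * (T (-1))^10 : Rq)) (by ring)

set_option maxHeartbeats 2000000 in
theorem lead_TTp2 : Lead TTp2 4 ((2 + (-2) * (T (-1))^2 + (-4) * (T (-1))^6 + 4 * (T (-1))^8 : Rq)) := by
  unfold TTp2
  exact (((((((((((((((((((((((lead_s).pow 4).congrD 4 (by norm_num))).add ((((((((lead_qi).pow 4).congrD 0 (by norm_num))).mul ((((lead_si).pow 4).congrD (-4) (by norm_num)))).congrD (-4) (by norm_num))).weak 4 (by norm_num)))).mul ((((((((Lead.ofNat 2)).sub (((((Lead.ofNat 2)).mul ((((lead_qi).pow 2).congrD 0 (by norm_num)))).congrD 0 (by norm_num))))).sub (((((Lead.ofNat 4)).mul ((((lead_qi).pow 6).congrD 0 (by norm_num)))).congrD 0 (by norm_num))))).add (((((Lead.ofNat 4)).mul ((((lead_qi).pow 8).congrD 0 (by norm_num)))).congrD 0 (by norm_num)))))).congrD 4 (by norm_num))).add ((((((((((lead_s).pow 2).congrD 2 (by norm_num))).add ((((((((lead_qi).pow 2).congrD 0 (by norm_num))).mul ((((lead_si).pow 2).congrD (-2) (by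 norm_num)))).congrD (-2) (by norm_num))).weak 2 (by norm_num)))).mul ((((((((((Lead.ofNat 5).neg).add (((((Lead.ofNat 4)).mul ((((lead_qi).pow 2).congrD 0 (by norm_num)))).congrD 0 (by norm_num))))).add (((((Lead.ofNat 12)).mul ((((lead_qi).pow 6).congrD 0 (by norm_num)))).congrD 0 (by norm_num))))).sub (((((Lead.ofNat 8)).mul ((((lead_qi).pow 8).congrD 0 (by norm_num)))).congrD 0 (by norm_num))))).sub (((((Lead.ofNat 4)).mul ((((lead_qi).pow 10).congrD 0 (by norm_num)))).congrD 0 (by norm_num)))))).congrD 2 (by norm_num))).weak 4 (by norm_num)))).add (((Lead.ofNat 4)).weak 4 (by norm_num)))).add ((((((Lead.ofNat 3)).mul ((((lead_qi).pow 2).congrD 0 (by norm_num)))).congrD 0 (by norm_num))).weak 4 (by norm_num)))).sub ((((((Lead.ofNat 6)).mul ((((lead_qi).pow 4).congrD 0 (by norm_num)))).congrD 0 (by norm_num))).weak 4 (by norm_num)))).sub ((((((Lead.ofNat 6)).mul ((((lead_qi).pow 6).congrD 0 (by norm_num)))).congrD 0 (by norm_num))).weak 4 (by norm_num)))).sub ((((((Lead.ofNat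 8)).mul ((((lead_qi).pow 8).congrD 0 (by norm_num)))).congrD 0 (by norm_num))).weak 4 (by norm_num)))).add ((((((Lead.ofNat 16)).mul ((((lead_qi).pow 10).congrD 0 (by norm_num)))).congrD 0 (by norm_num))).weak 4 (by norm_num)))).congrC ((2 + (-2) * (T (-1))^2 + (-4) * (T (-1))^6 + 4 * (T (-1))^8 : Rq)) (by ring)

set_option maxHeartbeats 2000000 in
theorem lead_TTp3 : Lead TTp3 2 ((2 * (T (-1))^2 + (-2) * (T (-1))^4 + 2 * (T (-1))^6 + (-4) * (T (-1))^8 + 2 * (T (-1))^10 : Rq)) := by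
  unfold TTp3
  exact (((((((((((((((((((((lead_s).pow 2).congrD 2 (by norm_num))).add ((((((((lead_qi).pow 2).congrD 0 (by norm_num))).mul ((((lead_si).pow 2).congrD (-2) (by norm_num)))).congrD (-2) (by norm_num))).weak 2 (by norm_num)))).mul (((((((((((((Lead.ofNat 2)).mul ((((lead_qi).pow 2).congrD 0 (by norm_num)))).congrD 0 (by norm_num))).sub (((((Lead.ofNat 2)).mul ((((lead_qi).pow 4).congrD 0 (by norm_num)))).congrD 0 (by norm_num))))).add (((((Lead.ofNat 2)).mul ((((lead_qi).pow 6).congrD 0 (by norm_num)))).congrD 0 (by norm_num))))).sub (((((Lead.ofNat 4)).mul ((((lead_qi).pow 8).congrD 0 (by norm_num)))).congrD 0 (by norm_num))))).add (((((Lead.ofNat 2)).mul ((((lead_qi).pow 10).congrD 0 (by norm_num)))).congrD 0 (by norm_num)))))).congrD 2 (by norm_num))).add ((Lead.one).weak 2 (by norm_num)))).sub ((((((Lead.ofNat 4)).mul ((((lead_qi).pow 2).congrD 0 (by norm_num)))).congrD 0 (by norm_num))).weak 2 (by norm_num)))).add ((((((Lead.ofNat 4)).mul ((((lead_qi).pow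 4).congrD 0 (by norm_num)))).congrD 0 (by norm_num))).weak 2 (by norm_num)))).sub ((((((Lead.ofNat 4)).mul ((((lead_qi).pow 6).congrD 0 (by norm_num)))).congrD 0 (by norm_num))).weak 2 (by norm_num)))).add ((((((Lead.ofNat 8)).mul ((((lead_qi).pow 8).congrD 0 (by norm_num)))).congrD 0 (by norm_num))).weak 2 (by norm_num)))).sub ((((((Lead.ofNat 4)).mul ((((lead_qi).pow 10).congrD 0 (by norm_num)))).congrD 0 (by norm_num))).weak 2 (by norm_num)))).congrC ((2 * (T (-1))^2 + (-2) * (T (-1))^4 + 2 * (T (-1))^6 + (-4) * (T (-1))^8 + 2 * (T (-1))^10 : Rq)) (by ring)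

set_option maxHeartbeats 2000000 in
theorem lead_TTm1 : Lead TTm1 2 (((T 1)^2 + (-2) + 2 * (T (-1))^2 + (-2) * (T (-1))^4 + 4 * (T (-1))^6 + (-2) * (T (-1))^8 : Rq)) := by
  unfold TTm1
  exact (((((((((((((((((((((lead_s).pow 2).congrD 2 (by norm_num))).add ((((((((lead_qi).pow 2).congrD 0 (by norm_num))).mul ((((lead_si).pow 2).congrD (-2) (by norm_num)))).congrD (-2) (by norm_num))).weak 2 (by norm_num)))).mul ((((((((((((((lead_q).pow 2).congrD 0 (by norm_num))).sub ((Lead.ofNat 2)))).add (((((Lead.ofNat 2)).mul ((((lead_qi).pow 2).congrD 0 (by norm_num)))).congrD 0 (by norm_num))))).sub (((((Lead.ofNat 2)).mul ((((lead_qi).pow 4).congrD 0 (by norm_num)))).congrD 0 (by norm_num))))).add (((((Lead.ofNat 4)).mul ((((lead_qi).pow 6).congrD 0 (by norm_num)))).congrD 0 (by norm_num))))).sub (((((Lead.ofNat 2)).mul ((((lead_qi).pow 8).congrD 0 (by norm_num)))).congrD 0 (by norm_num)))))).congrD 2 (by norm_num))).sub ((Lead.one).weak 2 (by norm_num)))).add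 ((((((Lead.ofNat 4)).mul ((((lead_qi).pow 2).congrD 0 (by norm_num)))).congrD 0 (by norm_num))).weak 2 (by norm_num)))).sub ((((((Lead.ofNat 4)).mul ((((lead_qi).pow 4).congrD 0 (by norm_num)))).congrD 0 (by norm_num))).weak 2 (by norm_num)))).add ((((((Lead.ofNat 4)).mul ((((lead_qi).pow 6).congrD 0 (by norm_num)))).congrD 0 (by norm_num))).weak 2 (by norm_num)))).sub ((((((Lead.ofNat 8)).mul ((((lead_qi).pow 8).congrD 0 (by norm_num)))).congrD 0 (by norm_num))).weak 2 (by norm_num)))).add ((((((Lead.ofNat 4)).mul ((((lead_qi).pow 10).congrD 0 (by norm_num)))).congrD 0 (by norm_num))).weak 2 (by norm_num)))).congrC (((T 1)^2 + (-2) + 2 * (T (-1))^2 + (-2) * (T (-1))^4 + 4 * (T (-1))^6 + (-2) * (T (-1))^8 : Rq)) (by ring)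

set_option maxHeartbeats 2000000 in
theorem lead_TTm2 : Lead TTm2 4 ((2 * (T 1)^2 + (-2) + (-4) * (T (-1))^4 + 4 * (T (-1))^6 : Rq)) := by
  unfold TTm2
  exact (((((((((((((((((((((((((lead_s).pow 4).congrD 4 (by norm_num))).add ((((((((lead_qi).pow 4).congrD 0 (by norm_num))).mul ((((lead_si).pow 4).congrD (-4) (by norm_num)))).congrD (-4) (by norm_num))).weak 4 (by norm_num)))).mul (((((((((((Lead.ofNat 2)).mul ((((lead_q).pow 2).congrD 0 (by norm_num)))).congrD 0 (by norm_num))).sub ((Lead.ofNat 2)))).sub (((((Lead.ofNat 4)).mul ((((lead_qi).pow 4).congrD 0 (by norm_num)))).congrD 0 (by norm_num))))).add (((((Lead.ofNat 4)).mul ((((lead_qi).pow 6).congrD 0 (by norm_num)))).congrD 0 (by norm_num)))))).congrD 4 (by norm_num))).add ((((((((((lead_s).pow 2).congrD 2 (by norm_num))).add ((((((((lead_qi).pow 2).congrD 0 (by norm_num))).mul ((((lead_si).pow 2).congrD (-2) (by norm_num)))).congrD (-2) (by norm_num))).weak 2 (by norm_num)))).mul (((((((((((((((Lead.ofNat 3).neg).mul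 ((((lead_q).pow 2).congrD 0 (by norm_num)))).congrD 0 (by norm_num))).sub ((Lead.ofNat 4)))).add (((((Lead.ofNat 8)).mul ((((lead_qi).pow 2).congrD 0 (by norm_num)))).congrD 0 (by norm_num))))).add (((((Lead.ofNat 4)).mul ((((lead_qi).pow 4).congrD 0 (by norm_num)))).congrD 0 (by norm_num))))).add (((((Lead.ofNat 8)).mul ((((lead_qi).pow 6).congrD 0 (by norm_num)))).congrD 0 (by norm_num))))).sub (((((Lead.ofNat 12)).mul ((((lead_qi).pow 8).congrD 0 (by norm_num)))).congrD 0 (by norm_num)))))).congrD 2 (by norm_num))).weak 4 (by norm_num)))).add (((((lead_q).pow 2).congrD 0 (by norm_num))).weak 4 (by norm_num)))).add (((Lead.ofNat 10)).weak 4 (by norm_num)))).sub ((((((Lead.ofNat 6)).mul ((((lead_qi).pow 2).congrD 0 (by norm_num)))).congrD 0 (by norm_num))).weak 4 (by norm_num)))).sub ((((((Lead.ofNat 6)).mul ((((lead_qi).pow 4).congrD 0 (by norm_num)))).congrD 0 (by norm_num))).weak 4 (by norm_num)))).sub ((((((Lead.ofNat 16)).mul ((((lead_qi).pow 6).congrD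 0 (by norm_num)))).congrD 0 (by norm_num))).weak 4 (by norm_num)))).add ((((((Lead.ofNat 8)).mul ((((lead_qi).pow 8).congrD 0 (by norm_num)))).congrD 0 (by norm_num))).weak 4 (by norm_num)))).add ((((((Lead.ofNat 8)).mul ((((lead_qi).pow 10).congrD 0 (by norm_num)))).congrD 0 (by norm_num))).weak 4 (by norm_num)))).congrC ((2 * (T 1)^2 + (-2) + (-4) * (T (-1))^4 + 4 * (T (-1))^6 : Rq)) (by ring)

set_option maxHeartbeats 2000000 in
theorem lead_TTm3 : Lead TTm3 2 ((2 + (-2) * (T (-1))^2 + 2 * (T (-1))^4 + (-4) * (T (-1))^6 + 2 * (T (-1))^8 : Rq)) := by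
  unfold TTm3
  exact (((((((((((((((((((((lead_s).pow 2).congrD 2 (by norm_num))).add ((((((((lead_qi).pow 2).congrD 0 (by norm_num))).mul ((((lead_si).pow 2).congrD (-2) (by norm_num)))).congrD (-2) (by norm_num))).weak 2 (by norm_num)))).mul ((((((((((Lead.ofNat 2)).sub (((((Lead.ofNat 2)).mul ((((lead_qi).pow 2).congrD 0 (by norm_num)))).congrD 0 (by norm_num))))).add (((((Lead.ofNat 2)).mul ((((lead_qi).pow 4).congrD 0 (by norm_num)))).congrD 0 (by norm_num))))).sub (((((Lead.ofNat 4)).mul ((((lead_qi).pow 6).congrD 0 (by norm_num)))).congrD 0 (by norm_num))))).add (((((Lead.ofNat 2)).mul ((((lead_qi).pow 8).congrD 0 (by norm_num)))).congrD 0 (by norm_num)))))).congrD 2 (by norm_num))).sub (((((lead_q).pow 2).congrD 0 (by norm_num))).weak 2 (by norm_num)))).sub ((((((Lead.ofNat 4)).mul ((((lead_qi).pow 2).congrD 0 (by norm_num)))).congrD 0 (by norm_num))).weak 2 (by norm_num)))).add ((((((Lead.ofNat 4)).mul ((((lead_qi).pow 4).congrD 0 (by norm_num)))).congrD 0 (by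 norm_num))).weak 2 (by norm_num)))).sub ((((((Lead.ofNat 4)).mul ((((lead_qi).pow 6).congrD 0 (by norm_num)))).congrD 0 (by norm_num))).weak 2 (by norm_num)))).add ((((((Lead.ofNat 8)).mul ((((lead_qi).pow 8).congrD 0 (by norm_num)))).congrD 0 (by norm_num))).weak 2 (by norm_num)))).sub ((((((Lead.ofNat 4)).mul ((((lead_qi).pow 10).congrD 0 (by norm_num)))).congrD 0 (by norm_num))).weak 2 (by norm_num)))).congrC ((2 + (-2) * (T (-1))^2 + 2 * (T (-1))^4 + (-4) * (T (-1))^6 + 2 * (T (-1))^8 : Rq)) (by ring)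

set_option maxHeartbeats 2000000 in
theorem lead_aCoef : Lead aCoef 2 (((T 1)^1 * (T (-1))^1 : Rq)) := by
  unfold aCoef
  exact (((((((lead_qi).mul (((lead_s).sub ((lead_si).weak 1 (by norm_num))))).congrD 1 (by norm_num))).mul ((((((lead_q).mul (lead_s)).congrD 1 (by norm_num))).sub (((((lead_qi).mul (lead_si)).congrD (-1) (by norm_num))).weak 1 (by norm_num))))).congrD 2 (by norm_num))).congrC (((T 1)^1 * (T (-1))^1 : Rq)) (by ring)

set_option maxHeartbeats 2000000 in
theorem lead_X1 : Lead X1 2 ((1 + (T (-1))^2 : Rq)) := by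
  unfold X1
  exact (((((((((((((lead_s).pow 2).congrD 2 (by norm_num))).add ((((((((lead_qi).pow 2).congrD 0 (by norm_num))).mul ((((lead_si).pow 2).congrD (-2) (by norm_num)))).congrD (-2) (by norm_num))).weak 2 (by norm_num)))).mul (((Lead.one).add ((((lead_qi).pow 2).congrD 0 (by norm_num)))))).congrD 2 (by norm_num))).sub ((((((Lead.ofNat 3)).mul ((((lead_qi).pow 2).congrD 0 (by norm_num)))).congrD 0 (by norm_num))).weak 2 (by norm_num)))).sub (((((lead_qi).pow 4).congrD 0 (by norm_num))).weak 2 (by norm_num)))).congrC ((1 + (T (-1))^2 : Rq)) (by ring)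

set_option maxHeartbeats 2000000 in
theorem lead_X2 : Lead X2 4 (((-1) : Rq)) := by
  unfold X2
  exact ((((((((((((((lead_s).pow 4).congrD 4 (by norm_num))).add ((((((((lead_qi).pow 4).congrD 0 (by norm_num))).mul ((((lead_si).pow 4).congrD (-4) (by norm_num)))).congrD (-4) (by norm_num))).weak 4 (by norm_num)))).neg)).add ((((((((((lead_s).pow 2).congrD 2 (by norm_num))).add ((((((((lead_qi).pow 2).congrD 0 (by norm_num))).mul ((((lead_si).pow 2).congrD (-2) (by norm_num)))).congrD (-2) (by norm_num))).weak 2 (by norm_num)))).mul ((((Lead.ofNat 3)).add ((((lead_qi).pow 2).congrD 0 (by norm_num)))))).congrD 2 (by norm_num))).weak 4 (by norm_num)))).sub (((Lead.ofNat 2)).weak 4 (by norm_num)))).sub ((((((Lead.ofNat 4)).mul ((((lead_qi).pow 2).congrD 0 (by norm_num)))).congrD 0 (by norm_num))).weak 4 (by norm_num)))).congrC (((-1) : Rq)) (by ring)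

set_option maxHeartbeats 2000000 in
theorem lead_X3 : Lead X3 2 ((2 : Rq)) := by
  unfold X3
  exact (((((((((Lead.ofNat 2)).mul ((((((lead_s).pow 2).congrD 2 (by norm_num))).add ((((((((lead_qi).pow 2).congrD 0 (by norm_num))).mul ((((lead_si).pow 2).congrD (-2) (by norm_num)))).congrD (-2) (by norm_num))).weak 2 (by norm_num))))).congrD 2 (by norm_num))).sub (((Lead.ofNat 3)).weak 2 (by norm_num)))).sub (((((lead_qi).pow 2).congrD 0 (by norm_num))).weak 2 (by norm_num)))).congrC ((2 : Rq)) (by ring)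

set_option maxHeartbeats 2000000 in
def cTv : Rq := 4 * (T 1)^2 + (-4) + (-4) * (T 1)^2 * (T (-1))^2 + (-8) * (T 1)^2 * (T (-1))^6 + 12 * (T (-1))^6 + 8 * (T 1)^2 * (T (-1))^8 + 8 * (T (-1))^8 + (-12) * (T (-1))^10 + (-8) * (T (-1))^12 + (-8) * (T (-1))^14 + 16 * (T (-1))^16 + (-4) * (T (-1))^18

set_option maxHeartbeats 4000000 in
theorem lead_Tv : Lead (Tvec.2.1) 8 cTv := by
  show Lead (TTp2 * TTm2 + X2 * (TTp3 * TTm3)) 8 cTv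
  unfold cTv
  exact ((((((lead_TTp2).mul (lead_TTm2)).congrD 8 (by norm_num))).add ((((lead_X2).mul ((((lead_TTp3).mul (lead_TTm3)).congrD 4 (by norm_num)))).congrD 8 (by norm_num))))).congrC _ (by ring)

set_option maxHeartbeats 2000000 in
def cTu : Rq := 4 * (T 1)^2 + (-6) + 2 * (T 1)^1 * (T (-1))^1 + (-6) * (T 1)^2 * (T (-1))^2 + 2 * (T 1)^3 * (T (-1))^3 + 16 * (T (-1))^2 + (-10) * (T 1)^1 * (T (-1))^3 + 4 * (T 1)^2 * (T (-1))^4 + (-2) * (T 1)^3 * (T (-1))^5 + (-20) * (T (-1))^4 + 18 * (T 1)^1 * (T (-1))^5 + (-8) * (T 1)^2 * (T (-1))^6 + 2 * (T 1)^3 * (T (-1))^7 + 40 * (T (-1))^6 + (-28) * (T 1)^1 * (T (-1))^7 + 12 * (T 1)^2 * (T (-1))^8 + (-4) * (T 1)^3 * (T (-1))^9 + (-64) * (T (-1))^8 + 50 * (T 1)^1 * (T (-1))^9 + (-4) * (T 1)^2 * (T (-1))^10 + 2 * (T 1)^3 * (T (-1))^11 + 44 * (T (-1))^10 + (-56) *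 (T 1)^1 * (T (-1))^11 + (-44) * (T (-1))^12 + 48 * (T 1)^1 * (T (-1))^13 + 48 * (T (-1))^14 + (-48) * (T 1)^1 * (T (-1))^15 + (-8) * (T (-1))^16 + 32 * (T 1)^1 * (T (-1))^17 + (-12) * (T (-1))^18 + (-8) * (T 1)^1 * (T (-1))^19 + 4 * (T (-1))^20

set_option maxHeartbeats 4000000 in
theorem lead_Tu : Lead (Tvec.1) 6 cTu := by
  show Lead (TTp1 * TTm2 + TTp2 * TTm1 + aCoef * (TTp1 * TTm3 + TTp3 * TTm1) + X1 * (TTp3 * TTm3)) 6 cTu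
  unfold cTu
  exact ((((((((((lead_TTp1).mul (lead_TTm2)).congrD 6 (by norm_num))).add ((((lead_TTp2).mul (lead_TTm1)).congrD 6 (by norm_num))))).add ((((lead_aCoef).mul ((((((lead_TTp1).mul (lead_TTm3)).congrD 4 (by norm_num))).add ((((lead_TTp3).mul (lead_TTm1)).congrD 4 (by norm_num)))))).congrD 6 (by norm_num))))).add ((((lead_X1).mul ((((lead_TTp3).mul (lead_TTm3)).congrD 4 (by norm_num)))).congrD 6 (by norm_num))))).congrC _ (by ring)

set_option maxHeartbeats 2000000 in
def cTw : Rq := 4 + 4 * (T 1)^2 * (T (-1))^2 + (-4) * (T (-1))^2 + (-4) * (T 1)^2 * (T (-1))^4 + (-4) * (T (-1))^4 + 4 * (T 1)^2 * (T (-1))^6 + (-8) * (T (-1))^6 + (-8) * (T 1)^2 * (T (-1))^8 + 4 * (T (-1))^8 + 4 * (T 1)^2 * (T (-1))^10 + 16 * (T (-1))^10 + (-16) * (T (-1))^16 + 8 * (T (-1))^18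

set_option maxHeartbeats 4000000 in
theorem lead_Tw : Lead (Tvec.2.2) 6 cTw := by
  show Lead (TTp2 * TTm3 + TTp3 * TTm2 + X3 * (TTp3 * TTm3)) 6 cTw
  unfold cTw
  exact ((((((((lead_TTp2).mul (lead_TTm3)).congrD 6 (by norm_num))).add ((((lead_TTp3).mul (lead_TTm2)).congrD 6 (by norm_num))))).add ((((lead_X3).mul ((((lead_TTp3).mul (lead_TTm3)).congrD 4 (by norm_num)))).congrD 6 (by norm_num))))).congrC _ (by ring)

set_option maxHeartbeats 2000000 in
theorem leadq_cTv : Lead cTv 2 ((4 : ℤ)) := by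
  unfold cTv
  exact (((((((((((((((((((((((((((Lead.ofNat 4)).mul ((((Lead.tvar 1).pow 2).congrD 2 (by norm_num)))).congrD 2 (by norm_num))).add (((Lead.ofNat 4).neg).weak 2 (by norm_num)))).add (((((((((Lead.ofNat 4).neg).mul ((((Lead.tvar 1).pow 2).congrD 2 (by norm_num)))).congrD 2 (by norm_num))).mul ((((Lead.tvar (-1)).pow 2).congrD (-2) (by norm_num)))).congrD 0 (by norm_num))).weak 2 (by norm_num)))).add (((((((((Lead.ofNat 8).neg).mul ((((Lead.tvar 1).pow 2).congrD 2 (by norm_num)))).congrD 2 (by norm_num))).mul ((((Lead.tvar (-1)).pow 6).congrD (-6) (by norm_num)))).congrD (-4) (by norm_num))).weak 2 (by norm_num)))).add ((((((Lead.ofNat 12)).mul ((((Lead.tvar (-1)).pow 6).congrD (-6) (by norm_num)))).congrD (-6) (by norm_num))).weak 2 (by norm_num)))).add (((((((((Lead.ofNat 8)).mul ((((Lead.tvar 1).pow 2).congrD 2 (by norm_num)))).congrD 2 (by norm_num))).mul ((((Lead.tvar (-1)).pow 8).congrD (-8) (by norm_num)))).congrD (-6) (by norm_num))).weak 2 (by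 norm_num)))).add ((((((Lead.ofNat 8)).mul ((((Lead.tvar (-1)).pow 8).congrD (-8) (by norm_num)))).congrD (-8) (by norm_num))).weak 2 (by norm_num)))).add ((((((Lead.ofNat 12).neg).mul ((((Lead.tvar (-1)).pow 10).congrD (-10) (by norm_num)))).congrD (-10) (by norm_num))).weak 2 (by norm_num)))).add ((((((Lead.ofNat 8).neg).mul ((((Lead.tvar (-1)).pow 12).congrD (-12) (by norm_num)))).congrD (-12) (by norm_num))).weak 2 (by norm_num)))).add ((((((Lead.ofNat 8).neg).mul ((((Lead.tvar (-1)).pow 14).congrD (-14) (by norm_num)))).congrD (-14) (by norm_num))).weak 2 (by norm_num)))).add ((((((Lead.ofNat 16)).mul ((((Lead.tvar (-1)).pow 16).congrD (-16) (by norm_num)))).congrD (-16) (by norm_num))).weak 2 (by norm_num)))).add ((((((Lead.ofNat 4).neg).mul ((((Lead.tvar (-1)).pow 18).congrD (-18) (by norm_num)))).congrD (-18) (by norm_num))).weak 2 (by norm_num)))).congrC ((4 : ℤ)) (by norm_num)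

set_option maxHeartbeats 2000000 in
theorem leadq_cTu : Lead cTu 2 ((4 : ℤ)) := by
  unfold cTu
  exact (((((((((((((((((((((((((((((((((((((((((((((((((((((((((((((((((((Lead.ofNat 4)).mul ((((Lead.tvar 1).pow 2).congrD 2 (by norm_num)))).congrD 2 (by norm_num))).add (((Lead.ofNat 6).neg).weak 2 (by norm_num)))).add (((((((((Lead.ofNat 2)).mul ((((Lead.tvar 1).pow 1).congrD 1 (by norm_num)))).congrD 1 (by norm_num))).mul ((((Lead.tvar (-1)).pow 1).congrD (-1) (by norm_num)))).congrD 0 (by norm_num))).weak 2 (by norm_num)))).add (((((((((Lead.ofNat 6).neg).mul ((((Lead.tvar 1).pow 2).congrD 2 (by norm_num)))).congrD 2 (by norm_num))).mul ((((Lead.tvar (-1)).pow 2).congrD (-2) (by norm_num)))).congrD 0 (by norm_num))).weak 2 (by norm_num)))).add (((((((((Lead.ofNat 2)).mul ((((Lead.tvar 1).pow 3).congrD 3 (by norm_num)))).congrD 3 (by norm_num))).mul ((((Lead.tvar (-1)).pow 3).congrD (-3) (by norm_num)))).congrD 0 (by norm_num))).weak 2 (by norm_num)))).add ((((((Lead.ofNat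 16)).mul ((((Lead.tvar (-1)).pow 2).congrD (-2) (by norm_num)))).congrD (-2) (by norm_num))).weak 2 (by norm_num)))).add (((((((((Lead.ofNat 10).neg).mul ((((Lead.tvar 1).pow 1).congrD 1 (by norm_num)))).congrD 1 (by norm_num))).mul ((((Lead.tvar (-1)).pow 3).congrD (-3) (by norm_num)))).congrD (-2) (by norm_num))).weak 2 (by norm_num)))).add (((((((((Lead.ofNat 4)).mul ((((Lead.tvar 1).pow 2).congrD 2 (by norm_num)))).congrD 2 (by norm_num))).mul ((((Lead.tvar (-1)).pow 4).congrD (-4) (by norm_num)))).congrD (-2) (by norm_num))).weak 2 (by norm_num)))).add (((((((((Lead.ofNat 2).neg).mul ((((Lead.tvar 1).pow 3).congrD 3 (by norm_num)))).congrD 3 (by norm_num))).mul ((((Lead.tvar (-1)).pow 5).congrD (-5) (by norm_num)))).congrD (-2) (by norm_num))).weak 2 (by norm_num)))).add ((((((Lead.ofNat 20).neg).mul ((((Lead.tvar (-1)).pow 4).congrD (-4) (by norm_num)))).congrD (-4) (by norm_num))).weak 2 (by norm_num)))).add (((((((((Lead.ofNat 18)).mul ((((Lead.tvar 1).pow 1).congrD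 1 (by norm_num)))).congrD 1 (by norm_num))).mul ((((Lead.tvar (-1)).pow 5).congrD (-5) (by norm_num)))).congrD (-4) (by norm_num))).weak 2 (by norm_num)))).add (((((((((Lead.ofNat 8).neg).mul ((((Lead.tvar 1).pow 2).congrD 2 (by norm_num)))).congrD 2 (by norm_num))).mul ((((Lead.tvar (-1)).pow 6).congrD (-6) (by norm_num)))).congrD (-4) (by norm_num))).weak 2 (by norm_num)))).add (((((((((Lead.ofNat 2)).mul ((((Lead.tvar 1).pow 3).congrD 3 (by norm_num)))).congrD 3 (by norm_num))).mul ((((Lead.tvar (-1)).pow 7).congrD (-7) (by norm_num)))).congrD (-4) (by norm_num))).weak 2 (by norm_num)))).add ((((((Lead.ofNat 40)).mul ((((Lead.tvar (-1)).pow 6).congrD (-6) (by norm_num)))).congrD (-6) (by norm_num))).weak 2 (by norm_num)))).add (((((((((Lead.ofNat 28).neg).mul ((((Lead.tvar 1).pow 1).congrD 1 (by norm_num)))).congrD 1 (by norm_num))).mul ((((Lead.tvar (-1)).pow 7).congrD (-7) (by norm_num)))).congrD (-6) (by norm_num))).weak 2 (by norm_num)))).add (((((((((Lead.ofNat 12)).mul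 ((((Lead.tvar 1).pow 2).congrD 2 (by norm_num)))).congrD 2 (by norm_num))).mul ((((Lead.tvar (-1)).pow 8).congrD (-8) (by norm_num)))).congrD (-6) (by norm_num))).weak 2 (by norm_num)))).add (((((((((Lead.ofNat 4).neg).mul ((((Lead.tvar 1).pow 3).congrD 3 (by norm_num)))).congrD 3 (by norm_num))).mul ((((Lead.tvar (-1)).pow 9).congrD (-9) (by norm_num)))).congrD (-6) (by norm_num))).weak 2 (by norm_num)))).add ((((((Lead.ofNat 64).neg).mul ((((Lead.tvar (-1)).pow 8).congrD (-8) (by norm_num)))).congrD (-8) (by norm_num))).weak 2 (by norm_num)))).add (((((((((Lead.ofNat 50)).mul ((((Lead.tvar 1).pow 1).congrD 1 (by norm_num)))).congrD 1 (by norm_num))).mul ((((Lead.tvar (-1)).pow 9).congrD (-9) (by norm_num)))).congrD (-8) (by norm_num))).weak 2 (by norm_num)))).add (((((((((Lead.ofNat 4).neg).mul ((((Lead.tvar 1).pow 2).congrD 2 (by norm_num)))).congrD 2 (by norm_num))).mul ((((Lead.tvar (-1)).pow 10).congrD (-10) (by norm_num)))).congrD (-8) (by norm_num))).weak 2 (by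 norm_num)))).add (((((((((Lead.ofNat 2)).mul ((((Lead.tvar 1).pow 3).congrD 3 (by norm_num)))).congrD 3 (by norm_num))).mul ((((Lead.tvar (-1)).pow 11).congrD (-11) (by norm_num)))).congrD (-8) (by norm_num))).weak 2 (by norm_num)))).add ((((((Lead.ofNat 44)).mul ((((Lead.tvar (-1)).pow 10).congrD (-10) (by norm_num)))).congrD (-10) (by norm_num))).weak 2 (by norm_num)))).add (((((((((Lead.ofNat 56).neg).mul ((((Lead.tvar 1).pow 1).congrD 1 (by norm_num)))).congrD 1 (by norm_num))).mul ((((Lead.tvar (-1)).pow 11).congrD (-11) (by norm_num)))).congrD (-10) (by norm_num))).weak 2 (by norm_num)))).add ((((((Lead.ofNat 44).neg).mul ((((Lead.tvar (-1)).pow 12).congrD (-12) (by norm_num)))).congrD (-12) (by norm_num))).weak 2 (by norm_num)))).add (((((((((Lead.ofNat 48)).mul ((((Lead.tvar 1).pow 1).congrD 1 (by norm_num)))).congrD 1 (by norm_num))).mul ((((Lead.tvar (-1)).pow 13).congrD (-13) (by norm_num)))).congrD (-12) (by norm_num))).weak 2 (by norm_num)))).add ((((((Lead.ofNat 48)).mul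 ((((Lead.tvar (-1)).pow 14).congrD (-14) (by norm_num)))).congrD (-14) (by norm_num))).weak 2 (by norm_num)))).add (((((((((Lead.ofNat 48).neg).mul ((((Lead.tvar 1).pow 1).congrD 1 (by norm_num)))).congrD 1 (by norm_num))).mul ((((Lead.tvar (-1)).pow 15).congrD (-15) (by norm_num)))).congrD (-14) (by norm_num))).weak 2 (by norm_num)))).add ((((((Lead.ofNat 8).neg).mul ((((Lead.tvar (-1)).pow 16).congrD (-16) (by norm_num)))).congrD (-16) (by norm_num))).weak 2 (by norm_num)))).add (((((((((Lead.ofNat 32)).mul ((((Lead.tvar 1).pow 1).congrD 1 (by norm_num)))).congrD 1 (by norm_num))).mul ((((Lead.tvar (-1)).pow 17).congrD (-17) (by norm_num)))).congrD (-16) (by norm_num))).weak 2 (by norm_num)))).add ((((((Lead.ofNat 12).neg).mul ((((Lead.tvar (-1)).pow 18).congrD (-18) (by norm_num)))).congrD (-18) (by norm_num))).weak 2 (by norm_num)))).add (((((((((Lead.ofNat 8).neg).mul ((((Lead.tvar 1).pow 1).congrD 1 (by norm_num)))).congrD 1 (by norm_num))).mul ((((Lead.tvar (-1)).pow 19).congrD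 (-19) (by norm_num)))).congrD (-18) (by norm_num))).weak 2 (by norm_num)))).add ((((((Lead.ofNat 4)).mul ((((Lead.tvar (-1)).pow 20).congrD (-20) (by norm_num)))).congrD (-20) (by norm_num))).weak 2 (by norm_num)))).congrC ((4 : ℤ)) (by norm_num)

set_option maxHeartbeats 2000000 in
theorem leadq_cTw : Lead cTw 0 ((8 : ℤ)) := by
  unfold cTw
  exact ((((((((((((((((((((((((((Lead.ofNat 4)).add ((((((((Lead.ofNat 4)).mul ((((Lead.tvar 1).pow 2).congrD 2 (by norm_num)))).congrD 2 (by norm_num))).mul ((((Lead.tvar (-1)).pow 2).congrD (-2) (by norm_num)))).congrD 0 (by norm_num))))).add ((((((Lead.ofNat 4).neg).mul ((((Lead.tvar (-1)).pow 2).congrD (-2) (by norm_num)))).congrD (-2) (by norm_num))).weak 0 (by norm_num)))).add (((((((((Lead.ofNat 4).neg).mul ((((Lead.tvar 1).pow 2).congrD 2 (by norm_num)))).congrD 2 (by norm_num))).mul ((((Lead.tvar (-1)).pow 4).congrD (-4) (by norm_num)))).congrD (-2) (by norm_num))).weak 0 (by norm_num)))).add ((((((Lead.ofNat 4).neg).mul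 ((((Lead.tvar (-1)).pow 4).congrD (-4) (by norm_num)))).congrD (-4) (by norm_num))).weak 0 (by norm_num)))).add (((((((((Lead.ofNat 4)).mul ((((Lead.tvar 1).pow 2).congrD 2 (by norm_num)))).congrD 2 (by norm_num))).mul ((((Lead.tvar (-1)).pow 6).congrD (-6) (by norm_num)))).congrD (-4) (by norm_num))).weak 0 (by norm_num)))).add ((((((Lead.ofNat 8).neg).mul ((((Lead.tvar (-1)).pow 6).congrD (-6) (by norm_num)))).congrD (-6) (by norm_num))).weak 0 (by norm_num)))).add (((((((((Lead.ofNat 8).neg).mul ((((Lead.tvar 1).pow 2).congrD 2 (by norm_num)))).congrD 2 (by norm_num))).mul ((((Lead.tvar (-1)).pow 8).congrD (-8) (by norm_num)))).congrD (-6) (by norm_num))).weak 0 (by norm_num)))).add ((((((Lead.ofNat 4)).mul ((((Lead.tvar (-1)).pow 8).congrD (-8) (by norm_num)))).congrD (-8) (by norm_num))).weak 0 (by norm_num)))).add (((((((((Lead.ofNat 4)).mul ((((Lead.tvar 1).pow 2).congrD 2 (by norm_num)))).congrD 2 (by norm_num))).mul ((((Lead.tvar (-1)).pow 10).congrD (-10)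 (by norm_num)))).congrD (-8) (by norm_num))).weak 0 (by norm_num)))).add ((((((Lead.ofNat 16)).mul ((((Lead.tvar (-1)).pow 10).congrD (-10) (by norm_num)))).congrD (-10) (by norm_num))).weak 0 (by norm_num)))).add ((((((Lead.ofNat 16).neg).mul ((((Lead.tvar (-1)).pow 16).congrD (-16) (by norm_num)))).congrD (-16) (by norm_num))).weak 0 (by norm_num)))).add ((((((Lead.ofNat 8)).mul ((((Lead.tvar (-1)).pow 18).congrD (-18) (by norm_num)))).congrD (-18) (by norm_num))).weak 0 (by norm_num)))).congrC ((8 : ℤ)) (by norm_num)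

set_option maxHeartbeats 2000000 in
theorem leadq_aCoefc : Lead (((T 1)^1 * (T (-1))^1 : Rq)) 0 ((1 : ℤ)) := by
  exact (((((((Lead.tvar 1).pow 1).congrD 1 (by norm_num))).mul ((((Lead.tvar (-1)).pow 1).congrD (-1) (by norm_num)))).congrD 0 (by norm_num))).congrC ((1 : ℤ)) (by norm_num)

set_option maxHeartbeats 2000000 in
theorem leadq_X1c : Lead ((1 + (T (-1))^2 : Rq)) 0 ((1 : ℤ)) := by
  exact (((Lead.one).add (((((Lead.tvar (-1)).pow 2).congrD (-2) (by norm_num))).weak 0 (by norm_num)))).congrC ((1 : ℤ)) (by norm_num)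

set_option maxHeartbeats 2000000 in
theorem leadq_X2c : Lead (((-1) : Rq)) 0 ((-1 : ℤ)) := by
  exact (Lead.one.neg).congrC ((-1 : ℤ)) (by norm_num)

set_option maxHeartbeats 2000000 in
theorem leadq_X3c : Lead ((2 : Rq)) 0 ((2 : ℤ)) := by
  exact ((Lead.ofNat 2)).congrC ((2 : ℤ)) (by norm_num)

-- ======================= induction =======================
def InvP (n : ℕ) : Prop :=
  (∃ V : Rq, Lead ((Tpow n).2.1) (8*(n:ℤ)) V ∧ Lead V (2*(n:ℤ)) ((4:ℤ)^n)) ∧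
  (∃ U : Rq, Lead ((Tpow n).1) (8*(n:ℤ)-2) U ∧ Lead U (2*(n:ℤ)) ((n:ℤ)*4^n)) ∧
  (LBd ((Tpow n).2.2) (8*(n:ℤ)-2) ∧ LBd (((Tpow n).2.2).coeff (8*(n:ℤ)-2)) (2*(n:ℤ)-2))

theorem inv_all : ∀ n : ℕ, InvP n := by
  intro n
  induction n with
  | zero =>
      refine ⟨⟨1, ?_, ?_⟩, ⟨0, ?_, ?_⟩, ?_, ?_⟩
      · show Lead (1 : R2) (8*((0:ℕ):ℤ)) 1
        exact Lead.one.congrD _ (by norm_num)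
      · exact (Lead.one.congrD _ (by norm_num)).congrC _ (by norm_num)
      · show Lead (0 : R2) (8*((0:ℕ):ℤ)-2) 0
        exact Lead.zero _
      · exact (Lead.zero _).congrC _ (by norm_num)
      · show LBd (0 : R2) (8*((0:ℕ):ℤ)-2)
        exact LBd.zero _
      · show LBd ((0 : R2).coeff (8*((0:ℕ):ℤ)-2)) (2*((0:ℕ):ℤ)-2)
        exact LBd.zero _
  | succ n ih =>
      obtain ⟨⟨V, hV, hVq⟩, ⟨U, hU, hUq⟩, hw, hwq⟩ := ih
      have e1 : (Tpow (n+1)).1 =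
          (Tpow n).1 * Tvec.2.1 + (Tpow n).2.1 * Tvec.1
            + aCoef * ((Tpow n).1 * Tvec.2.2 + (Tpow n).2.2 * Tvec.1)
            + X1 * ((Tpow n).2.2 * Tvec.2.2) := rfl
      have e2 : (Tpow (n+1)).2.1 =
          (Tpow n).2.1 * Tvec.2.1 + X2 * ((Tpow n).2.2 * Tvec.2.2) := rfl
      have e3 : (Tpow (n+1)).2.2 =
          (Tpow n).2.1 * Tvec.2.2 + (Tpow n).2.2 * Tvec.2.1
            + X3 * ((Tpow n).2.2 * Tvec.2.2) := rfl
      have hWlead : Lead ((Tpow (n+1)).2.2) (8*((n+1:ℕ):ℤ)-2)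
          (V * cTw + (Tpow n).2.2.coeff (8*(n:ℤ)-2) * cTv
            + 2 * ((Tpow n).2.2.coeff (8*(n:ℤ)-2) * cTw)) := by
        rw [e3]
        exact (((hV.mul lead_Tw).congrD (8*((n+1:ℕ):ℤ)-2) (by push_cast; ring)).add
          (((Lead.ofLBd hw).mul lead_Tv).congrD (8*((n+1:ℕ):ℤ)-2) (by push_cast; ring))).add
          ((lead_X3.mul ((Lead.ofLBd hw).mul lead_Tw)).congrD (8*((n+1:ℕ):ℤ)-2)
            (by push_cast; ring))
      refine ⟨⟨V * cTv + (-1) * ((Tpow n).2.2.coeff (8*(n:ℤ)-2) * cTw), ?_, ?_⟩,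
        ⟨U * cTv + V * cTu
          + (T 1)^1 * (T (-1))^1 * (U * cTw + (Tpow n).2.2.coeff (8*(n:ℤ)-2) * cTu)
          + (1 + (T (-1))^2) * ((Tpow n).2.2.coeff (8*(n:ℤ)-2) * cTw), ?_, ?_⟩, ?_, ?_⟩
      · rw [e2]
        exact ((hV.mul lead_Tv).congrD (8*((n+1:ℕ):ℤ)) (by push_cast; ring)).add
          ((lead_X2.mul ((Lead.ofLBd hw).mul lead_Tw)).congrD (8*((n+1:ℕ):ℤ))
            (by push_cast; ring))
      · exact (((hVq.mul leadq_cTv).congrD (2*((n+1:ℕ):ℤ)) (by push_cast; ring)).add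
          ((Lead.one.neg.2.mul (hwq.mul leadq_cTw.2)).lt (2*((n+1:ℕ):ℤ)) (by omega))).congrC
          _ (by push_cast; ring)
      · rw [e1]
        exact ((((hU.mul lead_Tv).congrD (8*((n+1:ℕ):ℤ)-2) (by push_cast; ring)).add
          ((hV.mul lead_Tu).congrD (8*((n+1:ℕ):ℤ)-2) (by push_cast; ring))).add
          ((lead_aCoef.mul ((hU.mul lead_Tw).add ((Lead.ofLBd hw).mul lead_Tu))).congrD
            (8*((n+1:ℕ):ℤ)-2) (by push_cast; ring))).add
          ((lead_X1.mul ((Lead.ofLBd hw).mul lead_Tw)).congrD (8*((n+1:ℕ):ℤ)-2)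
            (by push_cast; ring))
      · exact ((((hUq.mul leadq_cTv).congrD (2*((n+1:ℕ):ℤ)) (by push_cast; ring)).add
          ((hVq.mul leadq_cTu).congrD (2*((n+1:ℕ):ℤ)) (by push_cast; ring))).add
          ((leadq_aCoefc.2.mul ((hUq.2.mul leadq_cTw.2).add' (hwq.mul leadq_cTu.2)
            (2*(n:ℤ)) (by omega) (by omega))).lt (2*((n+1:ℕ):ℤ)) (by omega))).add
          ((leadq_X1c.2.mul (hwq.mul leadq_cTw.2)).lt (2*((n+1:ℕ):ℤ)) (by omega))
          |>.congrC _ (by push_cast; ring)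
      · exact hWlead.2
      · rw [hWlead.1]
        exact ((hVq.2.mul leadq_cTw.2).add' (hwq.mul leadq_cTv.2)
          (2*((n+1:ℕ):ℤ)-2) (by omega) (by omega)).add'
          (leadq_X3c.2.mul (hwq.mul leadq_cTw.2)) (2*((n+1:ℕ):ℤ)-2) (by omega) (by omega)

/-- leading terms of the components `u_n, v_n, w_n` of `T^{⊠n}`. -/
theorem leading_terms_of_Tpow :
    ∀ n : ℕ, 1 ≤ n →
      -- (i) `deg_s v_n = 8n`, coefficient of `s^{8n}` has `q`-degree `2n`, leading coeff `4ⁿ`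
      (sDegIs (Tpow n).2.1 (8 * n) ∧
        qLeadIs (sCoeff (Tpow n).2.1 (8 * n)) (2 * n) (4 ^ n)) ∧
      -- (ii) `deg_s u_n = 8n − 2`, coefficient of `s^{8n−2}` has `q`-degree `2n`,
      -- leading coeff `n·4ⁿ`
      (sDegIs (Tpow n).1 (8 * n - 2) ∧
        qLeadIs (sCoeff (Tpow n).1 (8 * n - 2)) (2 * n) (n * 4 ^ n)) ∧
      -- (iii) `deg_s w_n ≤ 8n − 2`, and if the coefficient of `s^{8n−2}` in `w_n` is
      -- nonzero then its `q`-degree is at most `2n − 2`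
      ((∀ k : ℤ, 8 * n - 2 < k → sCoeff (Tpow n).2.2 k = 0) ∧
        (sCoeff (Tpow n).2.2 (8 * n - 2) ≠ 0 →
          ∀ k : ℤ, 2 * n - 2 < k → qCoeff (sCoeff (Tpow n).2.2 (8 * n - 2)) k = 0)) := by
  intro n hn
  obtain ⟨⟨V, hV, hVq⟩, ⟨U, hU, hUq⟩, hw, hwq⟩ := inv_all n
  have hn0 : (0:ℤ) < (n:ℤ) := by exact_mod_cast hn
  refine ⟨⟨⟨?_, ?_⟩, ?_, by positivity, ?_⟩, ⟨⟨?_, ?_⟩, ?_, ?_, ?_⟩, ?_, ?_⟩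
  · show (Tpow n).2.1.coeff (8*(n:ℤ)) ≠ 0
    rw [hV.1]
    intro h0
    have h4 : ((4:ℤ)^n) = 0 := by rw [← hVq.1, h0]; simp
    norm_num at h4
  · exact hV.2
  · simp only [sCoeff, qCoeff]
    rw [hV.1]
    exact hVq.1
  · simp only [sCoeff, qCoeff]
    rw [hV.1]
    exact hVq.2
  · show (Tpow n).1.coeff (8*(n:ℤ)-2) ≠ 0
    rw [hU.1]
    intro h0
    have h4 : ((n:ℤ) * 4^n) = 0 := by rw [← hUq.1, h0]; simp
    have h5 : ((n:ℤ) * 4^n) ≠ 0 := (mul_pos hn0 (by positivity)).ne'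
    exact h5 h4
  · exact hU.2
  · simp only [sCoeff, qCoeff]
    rw [hU.1]
    exact hUq.1
  · exact (mul_pos hn0 (by positivity)).ne'
  · simp only [sCoeff, qCoeff]
    rw [hU.1]
    exact hUq.2
  · exact hw
  · intro _
    simp only [sCoeff, qCoeff]
    exact hwq
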